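/- The generator matrix G of a birth-and-death chain on {0,...,N} with strictly positive birth rates b_1,...,b_N, strictly positive death rates d_1,...,d_{N-1}, and d_N = 0 (so N is absorbing) has N+1 distinct real eigenvalues 0 = -λ_0 > -λ_1 > ... > -λ_N. -/

import Mathlib

open Matrix Polynomial Finset

/-- Generator of a birth-and-death chain on `{0,...,N}`:
`Gf(x) = b_{x+1}(f(x+1)-f(x)) + d_x(f(x-1)-f(x))`, with the conventions
`b_{N+1} = 0` (built in via the `if x < N` in the diagonal term; there is no
state `N+1`) and `d 0 = 0` (imposed as a hypothesis in the theorems). -/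
def bdGen (N : ℕ) (b d : ℕ → ℝ) : Matrix (Fin (N+1)) (Fin (N+1)) ℝ :=
  Matrix.of fun x y =>
    if (y : ℕ) = (x : ℕ) + 1 then b ((x : ℕ) + 1)
    else if (y : ℕ) + 1 = (x : ℕ) then d (x : ℕ)
    else if y = x then -((if (x : ℕ) < N then b ((x : ℕ) + 1) else 0) + d (x : ℕ))
    else 0

/-- similarity invariance of charpoly -/
lemma charpoly_conj' {n : Type*} [DecidableEq n] [Fintype n] {R : Type*} [CommRing R]
    (P Q M : Matrix n n R) (h1 : P * Q = 1) (h2 : Q * P = 1) :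
    (P * M * Q).charpoly = M.charpoly := by
  have key : charmatrix (P * M * Q) = P.map C * charmatrix M * Q.map C := by
    unfold charmatrix
    simp only [RingHom.mapMatrix_apply]
    rw [mul_sub, sub_mul]
    congr 1
    · have hc : ∀ B : Matrix n n R[X], (Matrix.scalar n (X : R[X])) * B
          = B * (Matrix.scalar n (X : R[X])) := by
        intro B
        exact (Matrix.scalar_commute (X : R[X]) (fun r => Commute.all _ _) B)
      symm
      calc P.map C * (Matrix.scalar n (X : R[X])) * Q.map C
          = (Matrix.scalar n (X : R[X])) * (P.map C * Q.map C) := by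
            rw [← hc (P.map C), mul_assoc]
        _ = Matrix.scalar n (X : R[X]) := by
            rw [← Matrix.map_mul, h1, Matrix.map_one C (map_zero C) (map_one C), mul_one]
    · rw [← Matrix.map_mul, ← Matrix.map_mul]
  unfold Matrix.charpoly
  rw [key, det_mul, det_mul]
  have : det (P.map C) * det (Q.map C) = 1 := by
    rw [← det_mul, ← Matrix.map_mul, h1, Matrix.map_one C (map_zero C) (map_one C), det_one]
  calc det (P.map C) * det (charmatrix M) * det (Q.map C)
      = det (charmatrix M) * (det (P.map C) * det (Q.map C)) := by ring
    _ = det (charmatrix M) := by rw [this, mul_one]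

lemma charpoly_diagonal' {n : Type*} [DecidableEq n] [Fintype n] {R : Type*} [CommRing R]
    (e : n → R) : (Matrix.diagonal e).charpoly = ∏ i, (X - C (e i)) := by
  unfold Matrix.charpoly
  have : charmatrix (Matrix.diagonal e) = Matrix.diagonal fun i => (X : R[X]) - C (e i) := by
    ext i j
    by_cases h : i = j
    · subst h; simp [charmatrix_apply_eq]
    · simp [charmatrix_apply_ne _ _ _ h, Matrix.diagonal_apply_ne _ h,
        Matrix.diagonal_apply_ne e h]
  rw [this, det_diagonal]

/-- the N×N corner -/
def bdA (N : ℕ) (b d : ℕ → ℝ) : Matrix (Fin N) (Fin N) ℝ :=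
  Matrix.of fun x y =>
    if (y : ℕ) = (x : ℕ) + 1 then b ((x : ℕ) + 1)
    else if (y : ℕ) + 1 = (x : ℕ) then d (x : ℕ)
    else if y = x then -(b ((x : ℕ) + 1) + d (x : ℕ))
    else 0

lemma bdGen_submatrix (N : ℕ) (b d : ℕ → ℝ) :
    (bdGen N b d).submatrix Fin.castSucc Fin.castSucc = bdA N b d := by
  ext x y
  simp only [Matrix.submatrix_apply, bdGen, bdA, Matrix.of_apply, Fin.coe_castSucc,
    Fin.castSucc_inj]
  have hx : (x : ℕ) < N := x.isLt
  by_cases h1 : (y : ℕ) = (x : ℕ) + 1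
  · simp [h1]
  · by_cases h2 : (y : ℕ) + 1 = (x : ℕ)
    · simp [h1, h2]
    · by_cases h3 : y = x
      · simp [h1, h2, h3, hx]
      · simp [h1, h2, h3]

lemma charpoly_bdGen (N : ℕ) (b d : ℕ → ℝ) (hdN : d N = 0) :
    (bdGen N b d).charpoly = X * (bdA N b d).charpoly := by
  unfold Matrix.charpoly
  rw [Matrix.det_succ_row _ (Fin.last N)]
  have hzero : ∀ j : Fin (N+1), j ≠ Fin.last N → charmatrix (bdGen N b d) (Fin.last N) j = 0 := by
    intro j hj
    have hjv : (j : ℕ) < N := by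
      have := j.isLt
      have : (j : ℕ) ≠ N := fun h => hj (Fin.ext (by simp [h, Fin.val_last]))
      omega
    rw [charmatrix_apply_ne _ _ _ (by exact fun h => hj h.symm)]
    have : bdGen N b d (Fin.last N) j = 0 := by
      simp only [bdGen, Matrix.of_apply, Fin.val_last]
      rw [if_neg (by omega)]
      by_cases h2 : (j : ℕ) + 1 = N
      · rw [if_pos h2, hdN]
      · rw [if_neg h2, if_neg (fun h => hj h), ]
    rw [this]
    simp
  rw [Finset.sum_eq_single (Fin.last N)]
  · have hdiag : charmatrix (bdGen N b d) (Fin.last N) (Fin.last N) = X := by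
      rw [charmatrix_apply_eq]
      have : bdGen N b d (Fin.last N) (Fin.last N) = 0 := by
        simp [bdGen, hdN]
      rw [this]; simp
    rw [hdiag]
    have hsub : (charmatrix (bdGen N b d)).submatrix (Fin.last N).succAbove
        (Fin.last N).succAbove = charmatrix (bdA N b d) := by
      have hcs : (Fin.last N).succAbove = Fin.castSucc := by
        funext i; exact Fin.succAbove_last_apply i
      rw [hcs]
      ext x y
      by_cases h : x = y
      · subst h
        simp [Matrix.submatrix_apply, charmatrix_apply_eq, ← bdGen_submatrix N b d]
      · have h' : (x : Fin N).castSucc ≠ y.castSucc := by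
          simpa [Fin.castSucc_inj] using h
        simp [Matrix.submatrix_apply, charmatrix_apply_ne _ _ _ h,
          charmatrix_apply_ne _ _ _ h', ← bdGen_submatrix N b d]
    rw [hsub]
    have : (-1 : ℝ[X]) ^ ((Fin.last N : ℕ) + (Fin.last N : ℕ)) = 1 := by
      simp only [Fin.val_last]
      exact Even.neg_one_pow ⟨N, rfl⟩
    rw [this, one_mul]
  · intro j _ hj
    rw [hzero j hj, mul_zero, zero_mul]
  · intro h
    exact absurd (Finset.mem_univ _) h

/-- extend a vector on `Fin N` to `ℕ` by zero -/
def extVec (N : ℕ) (w : Fin N → ℝ) : ℕ → ℝ := fun k => if h : k < N then w ⟨k, h⟩ else 0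

lemma sum_if_coe {N : ℕ} (m : ℕ) (f : Fin N → ℝ) :
    ∑ y : Fin N, (if (y : ℕ) = m then f y else 0) = if h : m < N then f ⟨m, h⟩ else 0 := by
  by_cases h : m < N
  · rw [dif_pos h]
    have hiff : ∀ y : Fin N, ((y : ℕ) = m) = (y = ⟨m, h⟩) := by
      intro y; simp [Fin.ext_iff]
    simp_rw [hiff]
    simp
  · rw [dif_neg h]
    apply Finset.sum_eq_zero
    intro y _
    have := y.isLt
    rw [if_neg (by omega)]

lemma bdA_rows (N : ℕ) (b d : ℕ → ℝ) (hd0 : d 0 = 0) (w : Fin N → ℝ) (μ : ℝ)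
    (h : (bdA N b d) *ᵥ w = μ • w) :
    ∀ k, k < N → b (k+1) * extVec N w (k+1) + d k * extVec N w (k-1)
      = (μ + (b (k+1) + d k)) * extVec N w k := by
  intro k hk
  have hrow := congrFun h ⟨k, hk⟩
  have hmv : (bdA N b d *ᵥ w) ⟨k, hk⟩ = ∑ y : Fin N, bdA N b d ⟨k, hk⟩ y * w y := rfl
  have split : ∀ y : Fin N, bdA N b d ⟨k, hk⟩ y * w y =
      (if (y : ℕ) = k + 1 then b (k+1) * w y else 0) +
      ((if (y : ℕ) + 1 = k then d k * w y else 0) +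
      (if (y : ℕ) = k then -(b (k+1) + d k) * w y else 0)) := by
    intro y
    simp only [bdA, Matrix.of_apply, Fin.ext_iff]
    by_cases h1 : (y : ℕ) = k + 1
    · rw [if_pos h1, if_pos h1, if_neg (by omega), if_neg (by omega)]; ring
    · rw [if_neg h1, if_neg h1]
      by_cases h2 : (y : ℕ) + 1 = k
      · rw [if_pos h2, if_pos h2, if_neg (by omega)]; ring
      · rw [if_neg h2, if_neg h2]
        by_cases h3 : (y : ℕ) = k
        · rw [if_pos h3, if_pos h3]; ring
        · rw [if_neg h3, if_neg h3]; ring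
  rw [hmv, Finset.sum_congr rfl (fun y _ => split y), Finset.sum_add_distrib,
    Finset.sum_add_distrib] at hrow
  rw [sum_if_coe (k+1) (fun y => b (k+1) * w y)] at hrow
  rw [sum_if_coe k (fun y => -(b (k+1) + d k) * w y)] at hrow
  have hsum2 : ∑ y : Fin N, (if (y : ℕ) + 1 = k then d k * w y else 0)
      = d k * extVec N w (k-1) := by
    rcases k with _ | k'
    · rw [hd0]
      simp
    · have : ∀ y : Fin N, ((y : ℕ) + 1 = k' + 1) = ((y : ℕ) = k') := by
        intro y; simp
      simp_rw [this]
      rw [sum_if_coe k' (fun y => d (k'+1) * w y)]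
      simp only [Nat.add_sub_cancel]
      unfold extVec
      split <;> simp
  rw [hsum2] at hrow
  have hk3 : extVec N w k = w ⟨k, hk⟩ := by unfold extVec; rw [dif_pos hk]
  have hk1 : (if h : k + 1 < N then b (k+1) * w ⟨k+1, h⟩ else 0)
      = b (k+1) * extVec N w (k+1) := by
    unfold extVec; split <;> simp
  have hsmul : (μ • w) ⟨k, hk⟩ = μ * w ⟨k, hk⟩ := rfl
  rw [hk1, hsmul] at hrow
  rw [dif_pos hk] at hrow
  rw [hk3]
  linarith [hrow]

lemma rec_zero (N : ℕ) (b d : ℕ → ℝ) (μ : ℝ) (v : ℕ → ℝ) (hN : 1 ≤ N)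
    (hb : ∀ x, 1 ≤ x → x ≤ N → 0 < b x) (hd0 : d 0 = 0)
    (hsupp : ∀ k, N ≤ k → v k = 0)
    (hrow : ∀ k, k < N → b (k+1) * v (k+1) + d k * v (k-1) = (μ + (b (k+1) + d k)) * v k)
    (h0 : v 0 = 0) : ∀ k, v k = 0 := by
  have key : ∀ k, v k = 0 ∧ v (k+1) = 0 := by
    intro k
    induction k with
    | zero =>
      refine ⟨h0, ?_⟩
      have hr := hrow 0 hN
      rw [hd0, h0] at hr
      have hb1 : 0 < b 1 := hb 1 le_rfl hN
      norm_num at hr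
      exact hr.resolve_left hb1.ne'
    | succ k ih =>
      refine ⟨ih.2, ?_⟩
      by_cases h : k + 1 < N
      · have hr := hrow (k+1) h
        simp only [Nat.add_sub_cancel] at hr
        rw [ih.1, ih.2] at hr
        have hbk : 0 < b (k+2) := hb (k+2) (by omega) (by omega)
        have : b (k+2) * v (k+2) = 0 := by linarith
        exact (mul_eq_zero.mp this).resolve_left hbk.ne'
      · exact hsupp (k+2) (by omega)
  exact fun k => (key k).1

lemma rec_neg (N : ℕ) (b d : ℕ → ℝ) (μ : ℝ) (v : ℕ → ℝ) (hN : 1 ≤ N)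
    (hb : ∀ x, 1 ≤ x → x ≤ N → 0 < b x)
    (hd : ∀ x, 1 ≤ x → x ≤ N - 1 → 0 < d x) (hd0 : d 0 = 0)
    (hμ : 0 ≤ μ)
    (hsupp : ∀ k, N ≤ k → v k = 0)
    (hrow : ∀ k, k < N → b (k+1) * v (k+1) + d k * v (k-1) = (μ + (b (k+1) + d k)) * v k)
    (h0 : 0 < v 0) : False := by
  have hb1 : 0 < b 1 := hb 1 le_rfl hN
  rcases Nat.lt_or_ge N 2 with hsmall | hbig
  · -- N = 1
    have hN1 : N = 1 := by omega
    have hr := hrow 0 (by omega)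
    rw [hd0] at hr
    have hv1 : v 1 = 0 := hsupp 1 (by omega)
    rw [hv1] at hr
    nlinarith
  · -- N ≥ 2
    have claim : ∀ k, k + 1 < N → 0 < v k ∧ v k ≤ v (k+1) := by
      intro k
      induction k with
      | zero =>
        intro hk
        refine ⟨h0, ?_⟩
        have hr := hrow 0 (by omega)
        rw [hd0] at hr
        norm_num at hr
        nlinarith
      | succ k ih =>
        intro hk
        obtain ⟨hvk, hmono⟩ := ih (by omega)
        have hvk1 : 0 < v (k+1) := lt_of_lt_of_le hvk hmono
        refine ⟨hvk1, ?_⟩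
        have hr := hrow (k+1) (by omega)
        simp only [Nat.add_sub_cancel] at hr
        have hbk : 0 < b (k+2) := hb (k+2) (by omega) (by omega)
        have hdk : 0 < d (k+1) := hd (k+1) (by omega) (by omega)
        nlinarith
    obtain ⟨K, rfl⟩ : ∃ K, N = K + 2 := ⟨N - 2, by omega⟩
    obtain ⟨hvK, hmono⟩ := claim K (by omega)
    have hvK1 : 0 < v (K+1) := lt_of_lt_of_le hvK hmono
    have hr := hrow (K+1) (by omega)
    simp only [Nat.add_sub_cancel] at hr
    have hvK2 : v (K+2) = 0 := hsupp (K+2) le_rfl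
    rw [hvK2] at hr
    have hbK : 0 < b (K+2) := hb (K+2) (by omega) (by omega)
    have hdK : 0 < d (K+1) := hd (K+1) (by omega) (by omega)
    nlinarith

lemma rec_neg' (N : ℕ) (b d : ℕ → ℝ) (μ : ℝ) (v : ℕ → ℝ) (hN : 1 ≤ N)
    (hb : ∀ x, 1 ≤ x → x ≤ N → 0 < b x)
    (hd : ∀ x, 1 ≤ x → x ≤ N - 1 → 0 < d x) (hd0 : d 0 = 0)
    (hμ : 0 ≤ μ)
    (hsupp : ∀ k, N ≤ k → v k = 0)
    (hrow : ∀ k, k < N → b (k+1) * v (k+1) + d k * v (k-1) = (μ + (b (k+1) + d k)) * v k)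
    (h0 : v 0 ≠ 0) : False := by
  rcases h0.lt_or_gt with hneg | hpos
  · refine rec_neg N b d μ (fun k => -(v k)) hN hb hd hd0 hμ
      (fun k hk => by rw [hsupp k hk]; ring) (fun k hk => by have := hrow k hk; linarith) ?_
    simpa using hneg
  · exact rec_neg N b d μ v hN hb hd hd0 hμ hsupp hrow hpos

noncomputable def bdU (b d : ℕ → ℝ) : ℕ → ℝ
  | 0 => 1
  | k+1 => bdU b d k * Real.sqrt (b (k+1) / d (k+1))

lemma bdU_pos (N : ℕ) (b d : ℕ → ℝ)
    (hb : ∀ x, 1 ≤ x → x ≤ N → 0 < b x)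
    (hd : ∀ x, 1 ≤ x → x ≤ N - 1 → 0 < d x) :
    ∀ k, k < N → 0 < bdU b d k := by
  intro k
  induction k with
  | zero => intro _; norm_num [bdU]
  | succ k ih =>
    intro hk
    have h1 : 0 < b (k+1) := hb (k+1) (by omega) (by omega)
    have h2 : 0 < d (k+1) := hd (k+1) (by omega) (by omega)
    have := ih (by omega)
    have : 0 < Real.sqrt (b (k+1) / d (k+1)) := Real.sqrt_pos.mpr (div_pos h1 h2)
    unfold bdU
    positivity

noncomputable def bdS (N : ℕ) (b d : ℕ → ℝ) : Matrix (Fin N) (Fin N) ℝ :=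
  Matrix.of fun x y =>
    if (y : ℕ) = (x : ℕ) + 1 then Real.sqrt (b ((x : ℕ) + 1) * d ((x : ℕ) + 1))
    else if (y : ℕ) + 1 = (x : ℕ) then Real.sqrt (b (x : ℕ) * d (x : ℕ))
    else if y = x then -(b ((x : ℕ) + 1) + d (x : ℕ))
    else 0

lemma bdS_herm (N : ℕ) (b d : ℕ → ℝ) : (bdS N b d).IsHermitian := by
  unfold Matrix.IsHermitian
  ext x y
  rw [Matrix.conjTranspose_apply, star_trivial]
  simp only [bdS, Matrix.of_apply, Fin.ext_iff]
  split_ifs <;> try omega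
  all_goals try rfl
  all_goals try rw [show (y : ℕ) = (x : ℕ) + 1 by omega]
  all_goals try rw [show (x : ℕ) = (y : ℕ) + 1 by omega]
  all_goals try rw [show (y : ℕ) = (x : ℕ) by omega]

lemma bdDA (N : ℕ) (b d : ℕ → ℝ)
    (hb : ∀ x, 1 ≤ x → x ≤ N → 0 < b x)
    (hd : ∀ x, 1 ≤ x → x ≤ N - 1 → 0 < d x) :
    Matrix.diagonal (fun x : Fin N => bdU b d (x : ℕ)) * bdA N b d
      = bdS N b d * Matrix.diagonal (fun x : Fin N => bdU b d (x : ℕ)) := by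
  ext x y
  rw [Matrix.diagonal_mul, Matrix.mul_diagonal]
  simp only [bdA, bdS, Matrix.of_apply]
  by_cases h1 : (y : ℕ) = (x : ℕ) + 1
  · rw [if_pos h1, if_pos h1, h1]
    have hby : 0 < b ((x : ℕ)+1) := hb _ (by omega) (by omega)
    have hdy : 0 < d ((x : ℕ)+1) := by
      refine hd _ (by omega) ?_
      have := y.isLt; omega
    show bdU b d (x : ℕ) * b ((x : ℕ)+1)
      = Real.sqrt (b ((x : ℕ)+1) * d ((x : ℕ)+1)) * bdU b d ((x : ℕ)+1)
    rw [show bdU b d ((x : ℕ)+1) = bdU b d (x : ℕ)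
        * Real.sqrt (b ((x : ℕ)+1) / d ((x : ℕ)+1)) from rfl]
    rw [show Real.sqrt (b ((x : ℕ)+1) * d ((x : ℕ)+1)) * (bdU b d (x : ℕ)
        * Real.sqrt (b ((x : ℕ)+1) / d ((x : ℕ)+1)))
      = bdU b d (x : ℕ) * (Real.sqrt (b ((x : ℕ)+1) * d ((x : ℕ)+1))
        * Real.sqrt (b ((x : ℕ)+1) / d ((x : ℕ)+1))) from by ring]
    congr 1
    rw [← Real.sqrt_mul (by positivity)]
    rw [show b ((x : ℕ)+1) * d ((x : ℕ)+1) * (b ((x : ℕ)+1) / d ((x : ℕ)+1))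
      = (b ((x : ℕ)+1))^2 from by field_simp]
    exact (Real.sqrt_sq hby.le).symm
  · rw [if_neg h1, if_neg h1]
    by_cases h2 : (y : ℕ) + 1 = (x : ℕ)
    · rw [if_pos h2, if_pos h2]
      have hby : 0 < b ((y : ℕ)+1) := hb _ (by omega) (by omega)
      have hdy : 0 < d ((y : ℕ)+1) := by
        refine hd _ (by omega) ?_
        have := x.isLt; omega
      rw [← h2]
      show bdU b d ((y : ℕ)+1) * d ((y : ℕ)+1)
        = Real.sqrt (b ((y : ℕ)+1) * d ((y : ℕ)+1)) * bdU b d (y : ℕ)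
      rw [show bdU b d ((y : ℕ)+1) = bdU b d (y : ℕ)
          * Real.sqrt (b ((y : ℕ)+1) / d ((y : ℕ)+1)) from rfl]
      rw [show bdU b d (y : ℕ) * Real.sqrt (b ((y : ℕ)+1) / d ((y : ℕ)+1)) * d ((y : ℕ)+1)
        = bdU b d (y : ℕ) * (Real.sqrt (b ((y : ℕ)+1) / d ((y : ℕ)+1)) * d ((y : ℕ)+1))
        from by ring]
      rw [show Real.sqrt (b ((y : ℕ)+1) * d ((y : ℕ)+1)) * bdU b d (y : ℕ)
        = bdU b d (y : ℕ) * Real.sqrt (b ((y : ℕ)+1) * d ((y : ℕ)+1)) from by ring]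
      congr 1
      rw [show Real.sqrt (b ((y : ℕ)+1) / d ((y : ℕ)+1)) * d ((y : ℕ)+1)
        = Real.sqrt (b ((y : ℕ)+1) / d ((y : ℕ)+1)) * Real.sqrt ((d ((y : ℕ)+1))^2)
        from by rw [Real.sqrt_sq hdy.le]]
      rw [← Real.sqrt_mul (by positivity)]
      congr 1
      field_simp
    · rw [if_neg h2, if_neg h2]
      by_cases h3 : y = x
      · rw [h3]; split_ifs <;> ring
      · split_ifs <;> first | ring | (rw [h3]; ring) | (exfalso; exact h3 (by assumption))

lemma charpoly_bdA_eq_bdS (N : ℕ) (b d : ℕ → ℝ)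
    (hb : ∀ x, 1 ≤ x → x ≤ N → 0 < b x)
    (hd : ∀ x, 1 ≤ x → x ≤ N - 1 → 0 < d x) :
    (bdA N b d).charpoly = (bdS N b d).charpoly := by
  set u : Fin N → ℝ := fun x => bdU b d (x : ℕ) with hu
  have hupos : ∀ x : Fin N, u x ≠ 0 := fun x => (bdU_pos N b d hb hd x x.isLt).ne'
  set D := Matrix.diagonal u with hD
  set D' := Matrix.diagonal (fun x => (u x)⁻¹) with hD'
  have h1 : D' * D = 1 := by
    rw [hD, hD', Matrix.diagonal_mul_diagonal]
    rw [show (fun i : Fin N => (u i)⁻¹ * u i) = fun _ => (1 : ℝ) from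
      funext fun x => inv_mul_cancel₀ (hupos x), Matrix.diagonal_one]
  have h2 : D * D' = 1 := by
    rw [hD, hD', Matrix.diagonal_mul_diagonal]
    rw [show (fun i : Fin N => u i * (u i)⁻¹) = fun _ => (1 : ℝ) from
      funext fun x => mul_inv_cancel₀ (hupos x), Matrix.diagonal_one]
  have hA : bdA N b d = D' * bdS N b d * D := by
    have hkey := bdDA N b d hb hd
    calc bdA N b d = 1 * bdA N b d := (one_mul _).symm
      _ = D' * D * bdA N b d := by rw [h1]
      _ = D' * (D * bdA N b d) := by rw [mul_assoc]
      _ = D' * (bdS N b d * D) := by rw [hkey]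
      _ = D' * bdS N b d * D := by rw [mul_assoc]
  rw [hA]
  exact charpoly_conj' D' D (bdS N b d) h1 h2

lemma charpoly_bdS_eig (N : ℕ) (b d : ℕ → ℝ) :
    (bdS N b d).charpoly = ∏ i, (X - C ((bdS_herm N b d).eigenvalues i)) := by
  have hS := bdS_herm N b d
  have hspec := hS.charpoly_eq
  rw [hspec]
  simp

lemma bdS_eig (N : ℕ) (hN : 1 ≤ N) (b d : ℕ → ℝ)
    (hb : ∀ x, 1 ≤ x → x ≤ N → 0 < b x)
    (hd : ∀ x, 1 ≤ x → x ≤ N - 1 → 0 < d x)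
    (hd0 : d 0 = 0) :
    (∀ i, (bdS_herm N b d).eigenvalues i < 0) ∧
      Function.Injective (bdS_herm N b d).eigenvalues := by
  have hS := bdS_herm N b d
  set u : Fin N → ℝ := fun x => bdU b d (x : ℕ) with hu
  have hupos : ∀ x : Fin N, u x ≠ 0 := fun x => (bdU_pos N b d hb hd x x.isLt).ne'
  -- eigenvectors of bdA
  have transfer : ∀ i : Fin N,
      bdA N b d *ᵥ (fun x => (u x)⁻¹ * hS.eigenvectorBasis i x)
        = hS.eigenvalues i • (fun x => (u x)⁻¹ * hS.eigenvectorBasis i x) := by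
    intro i
    set w : Fin N → ℝ := fun x => hS.eigenvectorBasis i x with hw
    set w' : Fin N → ℝ := fun x => (u x)⁻¹ * w x with hw'
    have hDw' : Matrix.diagonal u *ᵥ w' = w := by
      funext x
      rw [Matrix.mulVec_diagonal]
      show u x * ((u x)⁻¹ * w x) = w x
      rw [← mul_assoc, mul_inv_cancel₀ (hupos x), one_mul]
    have heig : bdS N b d *ᵥ w = hS.eigenvalues i • w := hS.mulVec_eigenvectorBasis i
    funext x
    apply mul_left_cancel₀ (hupos x)
    have lhs : u x * (bdA N b d *ᵥ w') x = (bdS N b d *ᵥ w) x := by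
      rw [← Matrix.mulVec_diagonal u (bdA N b d *ᵥ w') x, Matrix.mulVec_mulVec,
        bdDA N b d hb hd, ← Matrix.mulVec_mulVec, hDw']
    rw [lhs, heig]
    show hS.eigenvalues i * w x = u x * (hS.eigenvalues i • w') x
    show hS.eigenvalues i * w x = u x * (hS.eigenvalues i * ((u x)⁻¹ * w x))
    rw [show u x * (hS.eigenvalues i * ((u x)⁻¹ * w x))
      = (u x * (u x)⁻¹) * (hS.eigenvalues i * w x) from by ring,
      mul_inv_cancel₀ (hupos x), one_mul]
  -- the ℕ-extended eigenvector has nonzero first entry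
  have hrows : ∀ i : Fin N, ∀ k, k < N →
      b (k+1) * extVec N (fun x => (u x)⁻¹ * hS.eigenvectorBasis i x) (k+1)
        + d k * extVec N (fun x => (u x)⁻¹ * hS.eigenvectorBasis i x) (k-1)
      = (hS.eigenvalues i + (b (k+1) + d k))
          * extVec N (fun x => (u x)⁻¹ * hS.eigenvectorBasis i x) k :=
    fun i => bdA_rows N b d hd0 _ _ (transfer i)
  have hsupp : ∀ (g : Fin N → ℝ) (k : ℕ), N ≤ k → extVec N g k = 0 := by
    intro g k hk
    unfold extVec
    rw [dif_neg (by omega)]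
  have hfirst : ∀ i : Fin N,
      extVec N (fun x => (u x)⁻¹ * hS.eigenvectorBasis i x) 0 ≠ 0 := by
    intro i h0
    have hz := rec_zero N b d (hS.eigenvalues i)
      (extVec N (fun x => (u x)⁻¹ * hS.eigenvectorBasis i x)) hN hb hd0
      (hsupp _) (hrows i) h0
    have : hS.eigenvectorBasis i = 0 := by
      apply PiLp.ext
      intro x
      have hx := hz (x : ℕ)
      unfold extVec at hx
      rw [dif_pos x.isLt] at hx
      simp only [Fin.eta] at hx
      have : (u x)⁻¹ ≠ 0 := inv_ne_zero (hupos x)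
      have := (mul_eq_zero.mp hx).resolve_left this
      simpa using this
    have hnorm := hS.eigenvectorBasis.orthonormal.1 i
    rw [this] at hnorm
    simp at hnorm
  constructor
  · intro i
    by_contra hcon
    push_neg at hcon
    exact rec_neg' N b d (hS.eigenvalues i)
      (extVec N (fun x => (u x)⁻¹ * hS.eigenvectorBasis i x)) hN hb hd hd0 hcon
      (hsupp _) (hrows i) (hfirst i)
  · intro i j hij
    by_contra hne
    set vi := extVec N (fun x => (u x)⁻¹ * hS.eigenvectorBasis i x) with hvi
    set vj := extVec N (fun x => (u x)⁻¹ * hS.eigenvectorBasis j x) with hvj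
    set vz : ℕ → ℝ := fun k => vj 0 * vi k - vi 0 * vj k with hvz
    have hzrows : ∀ k, k < N → b (k+1) * vz (k+1) + d k * vz (k-1)
        = (hS.eigenvalues i + (b (k+1) + d k)) * vz k := by
      intro k hk
      have h1 := hrows i k hk
      have h2 := hrows j k hk
      rw [← hij] at h2
      simp only [hvz]
      linear_combination (vj 0) * h1 - (vi 0) * h2
    have hz := rec_zero N b d (hS.eigenvalues i) vz hN hb hd0
      (fun k hk => by simp only [hvz]; rw [show vi k = 0 from hsupp _ k hk, show vj k = 0 from hsupp _ k hk]; ring)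
      hzrows (by simp only [hvz]; ring)
    have hkey : ∀ x : Fin N, vj 0 * hS.eigenvectorBasis i x = vi 0 * hS.eigenvectorBasis j x := by
      intro x
      have hx := hz (x : ℕ)
      simp only [hvz] at hx
      have hvix : vi (x : ℕ) = (u x)⁻¹ * hS.eigenvectorBasis i x := by
        rw [hvi]; unfold extVec; rw [dif_pos x.isLt]
      have hvjx : vj (x : ℕ) = (u x)⁻¹ * hS.eigenvectorBasis j x := by
        rw [hvj]; unfold extVec; rw [dif_pos x.isLt]
      rw [hvix, hvjx] at hx
      have hu' : (u x)⁻¹ ≠ 0 := inv_ne_zero (hupos x)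
      have h2 : (u x)⁻¹ * (vj 0 * hS.eigenvectorBasis i x
          - vi 0 * hS.eigenvectorBasis j x) = 0 := by linear_combination hx
      have := (mul_eq_zero.mp h2).resolve_left hu'
      linarith
    have horm := hS.eigenvectorBasis.orthonormal
    have hinner : (inner ℝ (hS.eigenvectorBasis i) (hS.eigenvectorBasis j) : ℝ) = 0 :=
      horm.2 hne
    have hsm : vj 0 • hS.eigenvectorBasis i = vi 0 • hS.eigenvectorBasis j := by
      apply PiLp.ext
      intro x
      rw [PiLp.smul_apply, PiLp.smul_apply, smul_eq_mul, smul_eq_mul]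
      exact hkey x
    have hcalc : (inner ℝ (hS.eigenvectorBasis i) (vj 0 • hS.eigenvectorBasis i) : ℝ)
        = inner ℝ (hS.eigenvectorBasis i) (vi 0 • hS.eigenvectorBasis j) := by rw [hsm]
    rw [real_inner_smul_right, real_inner_smul_right, hinner, mul_zero,
      real_inner_self_eq_norm_sq, horm.1 i] at hcalc
    norm_num at hcalc
    exact hfirst j hcalc

/-- The generator of a birth-and-death chain on `{0,...,N}` absorbed at `N`
has `N+1` distinct real eigenvalues `0 = -λ_0 > -λ_1 > ... > -λ_N`. -/
theorem stmt0 (N : ℕ) (hN : 1 ≤ N) (b d : ℕ → ℝ)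
    (hb : ∀ x, 1 ≤ x → x ≤ N → 0 < b x)
    (hd : ∀ x, 1 ≤ x → x ≤ N - 1 → 0 < d x)
    (hd0 : d 0 = 0) (hdN : d N = 0) :
    ∃ lam : Fin (N+1) → ℝ, lam 0 = 0 ∧ StrictMono lam ∧
      (bdGen N b d).charpoly = ∏ i : Fin (N+1), (X - C (-lam i)) := by
  obtain ⟨heneg, heinj⟩ := bdS_eig N hN b d hb hd hd0
  set e := (bdS_herm N b d).eigenvalues with he
  have hninj : Function.Injective (fun i => -(e i)) := fun a c h => heinj (by
    simpa using neg_injective h)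
  set s : Finset ℝ := Finset.image (fun i => -(e i)) Finset.univ with hs
  have hcard : s.card = N := by
    rw [hs, Finset.card_image_of_injective _ hninj, Finset.card_univ, Fintype.card_fin]
  set m := s.orderIsoOfFin hcard with hm
  have hspos : ∀ y ∈ s, (0 : ℝ) < y := by
    intro y hy
    rw [hs, Finset.mem_image] at hy
    obtain ⟨i, _, rfl⟩ := hy
    linarith [heneg i]
  refine ⟨fun i => if h : (i : ℕ) = 0 then 0 else
    ((m ⟨(i : ℕ) - 1, by have := i.isLt; omega⟩ : ℝ)), ?_, ?_, ?_⟩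
  · simp
  · intro i j hij
    rw [Fin.lt_def] at hij
    dsimp only
    by_cases hi : (i : ℕ) = 0
    · rw [dif_pos hi, dif_neg (by omega)]
      exact hspos _ (m _).2
    · rw [dif_neg hi, dif_neg (by omega)]
      have : (⟨(i : ℕ) - 1, by have := i.isLt; omega⟩ : Fin N)
          < ⟨(j : ℕ) - 1, by have := j.isLt; omega⟩ := by
        rw [Fin.lt_def]; simp; omega
      exact_mod_cast m.lt_iff_lt.mpr this
  · rw [charpoly_bdGen N b d hdN, charpoly_bdA_eq_bdS N b d hb hd, charpoly_bdS_eig N b d,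
      Fin.prod_univ_succ]
    dsimp only
    norm_num
    have step1 : ∏ x : Fin N, ((X : ℝ[X]) + C (m x : ℝ)) = ∏ y ∈ s, (X + C y) := by
      rw [← Finset.prod_coe_sort s (fun y => (X + C (y : ℝ)))]
      exact Equiv.prod_comp m.toEquiv (fun y : {x // x ∈ s} => (X + C (y : ℝ)))
    rw [step1, hs, Finset.prod_image (fun a _ c _ h => hninj h)]
    apply Finset.prod_congr rfl
    intro i _
    rw [map_neg]
    ring
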